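/- arXiv:1311.4221 — 4 statements merged into one kernel-verified Lean document; each statement's English description precedes it below -/
import Mathlib

section
/- The map Φ₊ : (0,∞) × S² → ℝ³ \ {0} given in spherical-type coordinates by Φ₊(ρ, φ, θ) = (ρ sin θ cos φ, ρ sin θ sin φ, ρ³ cos θ) is a bijection. -/
lemma cubic_unique (a b t s : ℝ) (ha : 0 ≤ a) (hb : 0 ≤ b) (ht : 0 < t) (hs : 0 < s)
    (h1 : t^3 = a*t^2 + b) (h2 : s^3 = a*s^2 + b) : t = s := by
  have hta : a ≤ t := by
    by_contra hlt
    push_neg at hlt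
    have hfac : t^2 * (t - a) = b := by linear_combination h1
    nlinarith [mul_pos (mul_pos ht ht) (sub_pos.2 hlt)]
  have hsa : a ≤ s := by
    by_contra hlt
    push_neg at hlt
    have hfac : s^2 * (s - a) = b := by linear_combination h2
    nlinarith [mul_pos (mul_pos hs hs) (sub_pos.2 hlt)]
  have key : (t - s) * (t^2 + t*s + s^2 - a*(t+s)) = 0 := by linear_combination h1 - h2
  have hpos : 0 < t^2 + t*s + s^2 - a*(t+s) := by nlinarith [mul_pos ht hs]
  rcases mul_eq_zero.1 key with h | h
  · linarith
  · linarith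

lemma cubic_exists (a b : ℝ) (ha : 0 ≤ a) (hb : 0 ≤ b) (hab : 0 < a + b) :
    ∃ t, 0 < t ∧ t^3 = a*t^2 + b := by
  rcases eq_or_lt_of_le hb with hb0 | hb0
  · refine ⟨a, by linarith, by rw [← hb0]; ring⟩
  · set m := b ^ ((3:ℝ)⁻¹) with hm
    have hm0 : 0 < m := Real.rpow_pos_of_pos hb0 _
    have hm3 : m ^ 3 = b := by
      rw [hm, ← Real.rpow_natCast (b ^ ((3:ℝ)⁻¹)) 3, ← Real.rpow_mul hb]
      norm_num
    set M := m + a + 1 with hM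
    have hmM : m ≤ M := by linarith
    have hfm : m^3 - a*m^2 - b ≤ 0 := by nlinarith [sq_nonneg m]
    have hfM : 0 ≤ M^3 - a*M^2 - b := by nlinarith [sq_nonneg m, sq_nonneg (M - m), mul_pos hm0 hm0]
    have hcont : ContinuousOn (fun t : ℝ => t^3 - a*t^2 - b) (Set.Icc m M) := by fun_prop
    have := intermediate_value_Icc hmM hcont
    have h0 : (0:ℝ) ∈ Set.Icc (m^3 - a*m^2 - b) (M^3 - a*M^2 - b) := ⟨hfm, hfM⟩
    obtain ⟨t, htI, htf⟩ := this h0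
    exact ⟨t, lt_of_lt_of_le hm0 htI.1, by dsimp at htf; linarith⟩

/-- The map `Φ₊ : (0,∞) × S² → ℝ³ \ {0}`, `Φ₊(ρ, u) = (ρ u₁, ρ u₂, ρ³ u₃)`
(which in spherical coordinates `u = (sin θ cos φ, sin θ sin φ, cos θ)` is
`(ρ sin θ cos φ, ρ sin θ sin φ, ρ³ cos θ)`) is a bijection. -/
theorem stmt2 :
    Set.BijOn
      (fun p : ℝ × (Fin 3 → ℝ) => ![p.1 * p.2 0, p.1 * p.2 1, p.1 ^ 3 * p.2 2])
      (Set.Ioi (0 : ℝ) ×ˢ {u : Fin 3 → ℝ | u 0 ^ 2 + u 1 ^ 2 + u 2 ^ 2 = 1})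
      {v : Fin 3 → ℝ | v ≠ 0} := by
  constructor
  · rintro ⟨ρ, u⟩ ⟨hρ, hu⟩
    simp only [Set.mem_Ioi] at hρ
    simp only [Set.mem_setOf_eq] at hu ⊢
    intro h
    have h0 := congrFun h 0
    have h1 := congrFun h 1
    have h2 := congrFun h 2
    simp [Matrix.cons_val_zero, Matrix.cons_val_one] at h0 h1 h2
    have hρ' : ρ ≠ 0 := ne_of_gt hρ
    rcases h0 with h0 | h0 <;> rcases h1 with h1 | h1 <;> rcases h2 with h2 | h2 <;>
      first
      | (exfalso; exact hρ' (by assumption))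
      | (rw [h0, h1, h2] at hu; norm_num at hu)
      | nlinarith [hu, sq_nonneg ρ]
  constructor
  · rintro ⟨ρ, u⟩ ⟨hρ, hu⟩ ⟨σ, w⟩ ⟨hσ, hw⟩ h
    simp only [Set.mem_Ioi] at hρ hσ
    simp only [Set.mem_setOf_eq] at hu hw
    have h0 := congrFun h 0
    have h1 := congrFun h 1
    have h2 := congrFun h 2
    simp only [Matrix.cons_val_zero, Matrix.cons_val_one, Matrix.head_cons,
      Matrix.cons_val_two, Matrix.tail_cons] at h0 h1 h2
    set a := (ρ * u 0)^2 + (ρ * u 1)^2 with hadef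
    set b := (ρ^3 * u 2)^2 with hbdef
    have e1 : (ρ^2)^3 = a * (ρ^2)^2 + b := by
      rw [hadef, hbdef]; linear_combination (-ρ^6) * hu
    have e2 : (σ^2)^3 = a * (σ^2)^2 + b := by
      rw [hadef, hbdef, h0, h1, h2]; linear_combination (-σ^6) * hw
    have ha : 0 ≤ a := by positivity
    have hb : 0 ≤ b := by positivity
    have hsq : ρ^2 = σ^2 := cubic_unique a b _ _ ha hb (by positivity) (by positivity) e1 e2
    have hρσ : ρ = σ := by nlinarith
    have hρ' : ρ ≠ 0 := ne_of_gt hρ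
    have eu0 : u 0 = w 0 := mul_left_cancel₀ hρ' (by rw [h0, hρσ])
    have eu1 : u 1 = w 1 := mul_left_cancel₀ hρ' (by rw [h1, hρσ])
    have eu2 : u 2 = w 2 := mul_left_cancel₀ (pow_ne_zero 3 hρ') (by rw [h2, hρσ])
    have huw : u = w := by
      funext i
      fin_cases i
      · exact eu0
      · exact eu1
      · exact eu2
    rw [hρσ, huw]
  · rintro v hv
    simp only [Set.mem_setOf_eq] at hv
    set a := v 0 ^ 2 + v 1 ^ 2 with hadef
    set b := v 2 ^ 2 with hbdef
    have ha : 0 ≤ a := by positivity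
    have hb : 0 ≤ b := by positivity
    have hab : 0 < a + b := by
      rcases lt_or_eq_of_le (by positivity : (0:ℝ) ≤ a + b) with h | h
      · exact h
      · exfalso; apply hv
        have h0 : v 0 = 0 := by nlinarith [sq_nonneg (v 0), sq_nonneg (v 1), sq_nonneg (v 2)]
        have h1 : v 1 = 0 := by nlinarith [sq_nonneg (v 0), sq_nonneg (v 1), sq_nonneg (v 2)]
        have h2 : v 2 = 0 := by nlinarith [sq_nonneg (v 0), sq_nonneg (v 1), sq_nonneg (v 2)]
        funext i
        fin_cases i
        · exact h0
        · exact h1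
        · exact h2
    obtain ⟨t, ht, hteq⟩ := cubic_exists a b ha hb hab
    set ρ := Real.sqrt t with hρdef
    have hρ : 0 < ρ := Real.sqrt_pos.2 ht
    have hρ2 : ρ^2 = t := Real.sq_sqrt ht.le
    rw [← hρ2] at hteq
    have hρ' : ρ ≠ 0 := ne_of_gt hρ
    refine ⟨(ρ, ![v 0 / ρ, v 1 / ρ, v 2 / ρ^3]), ⟨Set.mem_Ioi.2 hρ, ?_⟩, ?_⟩
    · simp only [Set.mem_setOf_eq, Matrix.cons_val_zero, Matrix.cons_val_one, Matrix.head_cons,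
        Matrix.cons_val_two, Matrix.tail_cons]
      field_simp
      linear_combination (-1) * hteq
    · funext i
      fin_cases i
      · show ρ * (v 0 / ρ) = v 0
        field_simp
      · show ρ * (v 1 / ρ) = v 1
        field_simp
      · show ρ ^ 3 * (v 2 / ρ ^ 3) = v 2
        field_simp
end

section
/- On ℝ × S², away from θ ∈ {0, π}, the vectors v₁ = (fg)⁻¹(−3 cot θ ∂_φ + (1/2) sin θ ∂_ρ) and v₂ = 2ρ csc θ ∂_φ + ∂_θ satisfy λ₁(v₁) = λ₁(v₂) = 0 and dλ₁(v₁, v₂) = 1/f, where λ₁ = 3cos θ dρ − ρ sin θ dθ + (1/2)sin²θ dφ, g(θ) = 2cos²θ + 1, and f is any smooth positive function. -/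
open Real

/-- Away from `θ ∈ {0, π}` the vectors `v₁ = (fg)⁻¹(-3 cot θ ∂_φ + (1/2) sin θ ∂_ρ)` and
`v₂ = 2ρ csc θ ∂_φ + ∂_θ` satisfy `λ₁(v₁) = λ₁(v₂) = 0` and `dλ₁(v₁, v₂) = 1/f`, where
`λ₁ = 3 cos θ dρ - ρ sin θ dθ + (1/2) sin² θ dφ`, `g(θ) = 2 cos² θ + 1`,
`dλ₁ = (2 sin θ dρ - cos θ sin θ dφ) ∧ dθ`, and `f > 0`.
Components are ordered `(ρ, φ, θ)`. -/
theorem stmt9 (f ρ θ : ℝ) (hf : 0 < f) (hθ : θ ∈ Set.Ioo 0 π) :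
    let g := 2 * Real.cos θ ^ 2 + 1
    let v₁ : Fin 3 → ℝ :=
      ![(1 / 2) * Real.sin θ / (f * g), -3 * (Real.cos θ / Real.sin θ) / (f * g), 0]
    let v₂ : Fin 3 → ℝ := ![0, 2 * ρ / Real.sin θ, 1]
    let lam : (Fin 3 → ℝ) → ℝ := fun v =>
      3 * Real.cos θ * v 0 - ρ * Real.sin θ * v 2 + (1 / 2) * Real.sin θ ^ 2 * v 1
    let dlam : (Fin 3 → ℝ) → (Fin 3 → ℝ) → ℝ := fun u v =>
      (2 * Real.sin θ * u 0 - Real.cos θ * Real.sin θ * u 1) * v 2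
        - (2 * Real.sin θ * v 0 - Real.cos θ * Real.sin θ * v 1) * u 2
    lam v₁ = 0 ∧ lam v₂ = 0 ∧ dlam v₁ v₂ = 1 / f := by
  have hs : Real.sin θ ≠ 0 := ne_of_gt (Real.sin_pos_of_pos_of_lt_pi hθ.1 hθ.2)
  have hg : (2 * Real.cos θ ^ 2 + 1 : ℝ) ≠ 0 := by positivity
  have hf' : f ≠ 0 := ne_of_gt hf
  have hpy := Real.sin_sq_add_cos_sq θ
  simp only [Matrix.cons_val_zero, Matrix.cons_val_one, Matrix.head_cons,
    Matrix.cons_val_two, Matrix.tail_cons]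
  refine ⟨by field_simp; ring, by field_simp; ring, ?_⟩
  field_simp
  linear_combination hpy
end

section
/- Let μ : Σ(1) → ℤ be any map on the space of continuous paths Ψ : [0,1] → Sp(1) with Ψ(0) = I and det(Ψ(1) − I) ≠ 0, satisfying (a) invariance under homotopies within Σ(1), and (b) μ(Ψ⁻¹) = −μ(Ψ) where Ψ⁻¹(t) = Ψ(t)⁻¹. Then for any k ≠ 0, the path Ψ_{I,k}(t) = diag(e^{kt}, e^{−kt}) satisfies μ(Ψ_{I,k}) = 0. -/
open Matrix

noncomputable def Rθ (θ : ℝ) : Matrix (Fin 2) (Fin 2) ℝ :=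
  !![Real.cos θ, -Real.sin θ; Real.sin θ, Real.cos θ]

lemma Rθ_mul_neg (θ : ℝ) : Rθ θ * Rθ (-θ) = 1 := by
  ext i j
  fin_cases i <;> fin_cases j <;>
    simp [Rθ, Matrix.mul_apply, Fin.sum_univ_two, Matrix.one_apply] <;>
    nlinarith [Real.sin_sq_add_cos_sq θ]

lemma Rθ_det (θ : ℝ) : (Rθ θ).det = 1 := by
  simp [Rθ, Matrix.det_fin_two_of]
  nlinarith [Real.sin_sq_add_cos_sq θ]

lemma Rθ_cont : Continuous Rθ := by
  apply continuous_matrix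
  intro i j
  fin_cases i <;> fin_cases j <;> simp [Rθ] <;> fun_prop

lemma Rθ_zero : Rθ 0 = 1 := by
  ext i j
  fin_cases i <;> fin_cases j <;> simp [Rθ, Matrix.one_apply]

/-- Let `μ` be any integer-valued map on the space `Σ(1)` of continuous paths
`Ψ : [0,1] → Sp(1)` with `Ψ 0 = I` and `det (Ψ 1 - I) ≠ 0`, which is invariant under
homotopies within `Σ(1)` and satisfies `μ(Ψ⁻¹) = -μ(Ψ)` for the pointwise inverse path.
Then for any `k ≠ 0` the path `Ψ_{I,k}(t) = diag(e^{kt}, e^{-kt})` has `μ = 0`. -/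
theorem stmt11
    (μ : (ℝ → Matrix (Fin 2) (Fin 2) ℝ) → ℤ)
    (S : Set (ℝ → Matrix (Fin 2) (Fin 2) ℝ))
    (hS : S = {Ψ | ContinuousOn Ψ (Set.Icc 0 1) ∧
        (∀ t ∈ Set.Icc (0 : ℝ) 1, (Ψ t).det = 1) ∧ Ψ 0 = 1 ∧ (Ψ 1 - 1).det ≠ 0})
    (hHomotopy : ∀ H : ℝ → ℝ → Matrix (Fin 2) (Fin 2) ℝ,
        ContinuousOn (fun q : ℝ × ℝ => H q.1 q.2) (Set.Icc 0 1 ×ˢ Set.Icc 0 1) →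
        (∀ s ∈ Set.Icc (0 : ℝ) 1, H s ∈ S) → μ (H 0) = μ (H 1))
    (hInv : ∀ Ψ ∈ S, μ (fun t => (Ψ t)⁻¹) = - μ Ψ)
    (k : ℝ) (hk : k ≠ 0) :
    μ (fun t => Matrix.diagonal ![Real.exp (k * t), Real.exp (-(k * t))]) = 0 := by
  set Ψ : ℝ → Matrix (Fin 2) (Fin 2) ℝ :=
    fun t => Matrix.diagonal ![Real.exp (k * t), Real.exp (-(k * t))] with hΨ
  -- basic facts about Ψ
  have hdet : ∀ t : ℝ, (Ψ t).det = 1 := by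
    intro t
    simp [hΨ, Matrix.det_diagonal, Fin.prod_univ_two, ← Real.exp_add]
  have hΨ0 : Ψ 0 = 1 := by
    ext i j
    fin_cases i <;> fin_cases j <;>
      simp [hΨ, Matrix.diagonal, Matrix.one_apply]
  have hΨcont : Continuous Ψ := by
    apply continuous_matrix
    intro i j
    fin_cases i <;> fin_cases j <;> simp [hΨ, Matrix.diagonal] <;> fun_prop
  have hΨ1det : (Ψ 1 - 1).det ≠ 0 := by
    have h1 : Real.exp k ≠ 1 := by
      intro h
      exact hk (by rwa [← Real.exp_zero, Real.exp_eq_exp] at h)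
    have h1' : Real.exp k - 1 ≠ 0 := sub_ne_zero.mpr h1
    have h2 : Real.exp (-k) ≠ 1 := by
      intro h
      apply h1
      have := congrArg (· * Real.exp k) h
      simpa [← Real.exp_add] using this.symm
    have h2' : Real.exp (-k) - 1 ≠ 0 := sub_ne_zero.mpr h2
    have : (Ψ 1 - 1).det = (Real.exp k - 1) * (Real.exp (-k) - 1) := by
      simp [hΨ, Matrix.det_fin_two, Matrix.diagonal, Matrix.one_apply]
    rw [this]
    exact mul_ne_zero h1' h2'
  have hΨS : Ψ ∈ S := by
    rw [hS]
    exact ⟨hΨcont.continuousOn, fun t _ => hdet t, hΨ0, hΨ1det⟩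
  -- inverse path
  have hΨinv : ∀ t : ℝ, (Ψ t)⁻¹ = Matrix.diagonal ![Real.exp (-(k * t)), Real.exp (k * t)] := by
    intro t
    apply Matrix.inv_eq_left_inv
    ext i j
    fin_cases i <;> fin_cases j <;>
      simp [hΨ, Matrix.diagonal, Matrix.mul_apply, Fin.sum_univ_two, Matrix.one_apply,
        ← Real.exp_add]
  -- the homotopy
  set H : ℝ → ℝ → Matrix (Fin 2) (Fin 2) ℝ :=
    fun s t => Rθ (s * (Real.pi / 2)) * Ψ t * Rθ (-(s * (Real.pi / 2))) with hH
  have hHcont : ContinuousOn (fun q : ℝ × ℝ => H q.1 q.2) (Set.Icc 0 1 ×ˢ Set.Icc 0 1) := by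
    apply Continuous.continuousOn
    apply Continuous.matrix_mul
    apply Continuous.matrix_mul
    · exact Rθ_cont.comp (by fun_prop)
    · exact hΨcont.comp continuous_snd
    · exact Rθ_cont.comp (by fun_prop)
  have hHmem : ∀ s ∈ Set.Icc (0 : ℝ) 1, H s ∈ S := by
    intro s _
    rw [hS]
    refine ⟨?_, ?_, ?_, ?_⟩
    · apply Continuous.continuousOn
      apply Continuous.matrix_mul
      apply Continuous.matrix_mul
      · exact continuous_const
      · exact hΨcont
      · exact continuous_const
    · intro t _
      simp [hH, Matrix.det_mul, Rθ_det, hdet t]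
    · simp [hH, hΨ0, Rθ_mul_neg]
    · have key : H s 1 - 1 = Rθ (s * (Real.pi / 2)) * (Ψ 1 - 1) * Rθ (-(s * (Real.pi / 2))) := by
        simp [hH, Matrix.mul_sub, Matrix.sub_mul, Rθ_mul_neg]
      rw [key]
      simp only [Matrix.det_mul, Rθ_det, one_mul, mul_one]
      exact hΨ1det
  have hkey := hHomotopy H hHcont hHmem
  -- H 0 = Ψ
  have hH0 : H 0 = Ψ := by
    funext t
    simp [hH, Rθ_zero]
  -- H 1 = pointwise inverse of Ψ
  have hH1 : H 1 = fun t => (Ψ t)⁻¹ := by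
    funext t
    rw [hΨinv t]
    have hc : Real.cos (Real.pi / 2) = 0 := Real.cos_pi_div_two
    have hs : Real.sin (Real.pi / 2) = 1 := Real.sin_pi_div_two
    ext i j
    fin_cases i <;> fin_cases j <;>
      simp [hH, Rθ, hc, hs, Matrix.mul_apply, Fin.sum_univ_two, Matrix.diagonal, hΨ,
        Matrix.vecHead, Matrix.vecTail]
  rw [hH0, hH1] at hkey
  have := hInv Ψ hΨS
  rw [← hkey] at this
  omega
end

section
/- Let f : ℝ → ℝ be smooth and positive with ρ f'(ρ) > 0 for ρ ≠ 0, and on ℝ × S² (coordinates ρ, φ, θ) consider the vector field X_f = [g(θ)f(ρ)²]⁻¹ [(−ρf' + 2f)∂_φ − (1/2)sin θ f' ∂_θ + f cos θ ∂_ρ], where g(θ) = 2cos²θ + 1. Define Z(ρ, θ) = ρ cos θ. Then dZ(X_f) = [g(θ)f(ρ)²]⁻¹ (f cos²θ + (1/2) f' ρ sin²θ) ≥ 0 everywhere, with equality if and only if ρ = 0 and θ = π/2. -/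
open Real
open scoped ContDiff

/-- Let `f : ℝ → ℝ` be smooth and positive with `ρ f'(ρ) > 0` for `ρ ≠ 0`, and consider on
`ℝ × S²` the Reeb field
`X_f = (g(θ) f(ρ)²)⁻¹ [(-ρ f' + 2f) ∂_φ - (1/2) sin θ f' ∂_θ + f cos θ ∂_ρ]`,
`g(θ) = 2 cos² θ + 1`, together with `Z(ρ,θ) = ρ cos θ` (so `dZ = cos θ dρ - ρ sin θ dθ`).
Then `dZ(X_f) = (g f²)⁻¹ (f cos² θ + (1/2) f' ρ sin² θ) ≥ 0`, with equality iff `ρ = 0` and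
`θ = π/2`. -/
theorem stmt18 (f : ℝ → ℝ) (hf : ContDiff ℝ ∞ f) (hfpos : ∀ ρ, 0 < f ρ)
    (hmono : ∀ ρ : ℝ, ρ ≠ 0 → 0 < ρ * deriv f ρ)
    (ρ θ : ℝ) (hθ : θ ∈ Set.Icc 0 π) :
    let g := 2 * Real.cos θ ^ 2 + 1
    let Xρ := f ρ * Real.cos θ / (g * f ρ ^ 2)
    let Xθ := -(1 / 2) * Real.sin θ * deriv f ρ / (g * f ρ ^ 2)
    let D := (g * f ρ ^ 2)⁻¹ *
      (f ρ * Real.cos θ ^ 2 + (1 / 2) * deriv f ρ * ρ * Real.sin θ ^ 2)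
    (Real.cos θ * Xρ - ρ * Real.sin θ * Xθ = D) ∧ 0 ≤ D ∧
      (D = 0 ↔ ρ = 0 ∧ θ = π / 2) := by
  intro g Xρ Xθ D
  have hfρ : 0 < f ρ := hfpos ρ
  have hg : 0 < g := by positivity
  have hgf : 0 < g * f ρ ^ 2 := by positivity
  have hterm1 : 0 ≤ f ρ * Real.cos θ ^ 2 := by positivity
  have hterm2 : 0 ≤ (1 / 2) * deriv f ρ * ρ * Real.sin θ ^ 2 := by
    rcases eq_or_ne ρ 0 with h | h
    · simp [h]
    · have := (hmono ρ h).le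
      nlinarith [sq_nonneg (Real.sin θ), hmono ρ h]
  refine ⟨by field_simp [Xρ, Xθ, D, hgf.ne']; ring, ?_, ?_⟩
  · have : 0 ≤ (g * f ρ ^ 2)⁻¹ := by positivity
    exact mul_nonneg this (by linarith)
  · constructor
    · intro hD
      have hsum : f ρ * Real.cos θ ^ 2 + (1 / 2) * deriv f ρ * ρ * Real.sin θ ^ 2 = 0 := by
        have := mul_eq_zero.mp hD
        rcases this with h | h
        · exact absurd h (by positivity)
        · exact h
      have h1 : f ρ * Real.cos θ ^ 2 = 0 := le_antisymm (by linarith) hterm1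
      have h2 : (1 / 2) * deriv f ρ * ρ * Real.sin θ ^ 2 = 0 := by linarith
      have hcos : Real.cos θ = 0 := by
        rcases mul_eq_zero.mp h1 with h | h
        · exact absurd h hfρ.ne'
        · exact (pow_eq_zero_iff two_ne_zero).mp h
      have hθeq : θ = π / 2 := by
        have hmem : π / 2 ∈ Set.Icc 0 π := by
          constructor <;> linarith [Real.pi_pos]
        exact Real.injOn_cos hθ hmem (by rw [hcos, Real.cos_pi_div_two])
      have hsin : Real.sin θ = 1 := by rw [hθeq]; simp
      have hρ : ρ = 0 := by
        by_contra h
        have := hmono ρ h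
        rw [hsin] at h2
        nlinarith
      exact ⟨hρ, hθeq⟩
    · rintro ⟨h1, h2⟩
      simp [D, h1, h2]
end
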